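/- Let G1 be an r1-regular graph with n1 vertices and m1 edges (r1 ≥ 1), G2 an r2-regular graph with n2 vertices, and G3 an r3-regular graph with n3 vertices, and let 𝔊 = G1^S ◊ (G2^V ∪ G3^E). Identify the vertex set of 𝔊 with V(G1) ⊔ I(G1) ⊔ (I(G1)×V(G2)) ⊔ (V(G1)×V(G3)). Then the normalized Laplacian of 𝔊 is the block matrix 𝓛(𝔊) = [[I_{n1}, −a·R(G1), −R(G1) ⊗ bᵀ, −I_{n1} ⊗ cᵀ], [−a·R(G1)ᵀ, I_{m1}, O, O], [−R(G1)ᵀ ⊗ b, O, I_{m1} ⊗ (I_{n2} − A(G2)/(r2+2)), O], [−I_{n1} ⊗ c, O, O, I_{n1} ⊗ (I_{n3} − A(G3)/(r3+1))]], where R(G1) is the incidence matrix of G1, a = 1/√(2(r1·n2+r1+n3)), b = (1/√((r2+2)(r1·n2+r1+n3)))·𝟏_{n2}, c = (1/√((r3+1)(r1·n2+r1+n3)))·𝟏_{n3}, ⊗ is the Kronecker product, and 𝟏_k is the all-ones column vector of size k. -/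

import Mathlib

open Matrix Polynomial BigOperators Kronecker

namespace NLS

variable {V : Type*}

/-- Adjacency matrix over `ℝ` (classical decidability). -/
noncomputable def adjMat (G : SimpleGraph V) : Matrix V V ℝ :=
  letI := Classical.decRel G.Adj
  G.adjMatrix ℝ

/-- Degree of a vertex (classical decidability). -/
noncomputable def deg [Fintype V] (G : SimpleGraph V) (v : V) : ℕ :=
  letI := Classical.decRel G.Adj
  G.degree v

/-- The normalized Laplacian `I - D^{-1/2} A D^{-1/2}`. -/
noncomputable def normLap [Fintype V] (G : SimpleGraph V) : Matrix V V ℝ :=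
  letI := Classical.decEq V
  1 - (Matrix.diagonal fun v => (Real.sqrt (deg G v))⁻¹) * adjMat G *
      (Matrix.diagonal fun v => (Real.sqrt (deg G v))⁻¹)

/-- `G` is `r`-regular. -/
def IsReg [Fintype V] (G : SimpleGraph V) (r : ℕ) : Prop := ∀ v, deg G v = r

/-- Vertex-edge incidence matrix over `ℝ`. -/
def incMat [DecidableEq V] (G : SimpleGraph V) : Matrix V G.edgeSet ℝ :=
  Matrix.of fun v e => if v ∈ (e : Sym2 V) then 1 else 0

/-- The number of spanning trees of `G`. -/
noncomputable def numSpanningTrees [Fintype V] (G : SimpleGraph V) : ℕ :=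
  Nat.card {H : SimpleGraph V // H ≤ G ∧ H.IsTree}

section Corona

variable {V1 V2 V3 : Type*}

/-- Adjacency for the subdivision vertex-edge neighbourhood **vertex**-corona
`G1^S ⋈ (G2^V ∪ G3^E)`. Vertices: original `V1`, inserted `G1.edgeSet`,
copies of `G2` indexed by `V1`, copies of `G3` indexed by `G1.edgeSet`. -/
def svevAdj (G1 : SimpleGraph V1) (G2 : SimpleGraph V2) (G3 : SimpleGraph V3) :
    (V1 ⊕ (G1.edgeSet ⊕ ((V1 × V2) ⊕ (G1.edgeSet × V3)))) →
    (V1 ⊕ (G1.edgeSet ⊕ ((V1 × V2) ⊕ (G1.edgeSet × V3)))) → Prop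
  | .inl v, .inr (.inl e) => v ∈ (e : Sym2 V1)
  | .inr (.inl e), .inl v => v ∈ (e : Sym2 V1)
  | .inr (.inl e), .inr (.inr (.inl p)) => p.1 ∈ (e : Sym2 V1)
  | .inr (.inr (.inl p)), .inr (.inl e) => p.1 ∈ (e : Sym2 V1)
  | .inr (.inl e), .inr (.inr (.inr q)) => q.1 = e
  | .inr (.inr (.inr q)), .inr (.inl e) => q.1 = e
  | .inr (.inr (.inl p)), .inr (.inr (.inl p')) => p.1 = p'.1 ∧ G2.Adj p.2 p'.2
  | .inr (.inr (.inr q)), .inr (.inr (.inr q')) => q.1 = q'.1 ∧ G3.Adj q.2 q'.2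
  | _, _ => False

/-- The subdivision vertex-edge neighbourhood vertex-corona `G1^S ⋈ (G2^V ∪ G3^E)`. -/
def svev (G1 : SimpleGraph V1) (G2 : SimpleGraph V2) (G3 : SimpleGraph V3) :
    SimpleGraph (V1 ⊕ (G1.edgeSet ⊕ ((V1 × V2) ⊕ (G1.edgeSet × V3)))) where
  Adj := svevAdj G1 G2 G3
  symm := by
    constructor
    rintro (v|e|p|q) (v'|e'|p'|q') h <;>
      first
        | exact h
        | exact ⟨h.1.symm, h.2.symm⟩
        | exact h.elim
  loopless := by
    constructor
    rintro (v|e|p|q) h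
    · exact h
    · exact h
    · exact G2.loopless.irrefl _ h.2
    · exact G3.loopless.irrefl _ h.2

/-- Adjacency for the subdivision vertex-edge neighbourhood **edge**-corona
`G1^S ◊ (G2^V ∪ G3^E)`. Vertices: original `V1`, inserted `G1.edgeSet`,
copies of `G2` indexed by `G1.edgeSet`, copies of `G3` indexed by `V1`. -/
def sveeAdj (G1 : SimpleGraph V1) (G2 : SimpleGraph V2) (G3 : SimpleGraph V3) :
    (V1 ⊕ (G1.edgeSet ⊕ ((G1.edgeSet × V2) ⊕ (V1 × V3)))) →
    (V1 ⊕ (G1.edgeSet ⊕ ((G1.edgeSet × V2) ⊕ (V1 × V3)))) → Prop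
  | .inl v, .inr (.inl e) => v ∈ (e : Sym2 V1)
  | .inr (.inl e), .inl v => v ∈ (e : Sym2 V1)
  | .inl v, .inr (.inr (.inl p)) => v ∈ (p.1 : Sym2 V1)
  | .inr (.inr (.inl p)), .inl v => v ∈ (p.1 : Sym2 V1)
  | .inl v, .inr (.inr (.inr q)) => q.1 = v
  | .inr (.inr (.inr q)), .inl v => q.1 = v
  | .inr (.inr (.inl p)), .inr (.inr (.inl p')) => p.1 = p'.1 ∧ G2.Adj p.2 p'.2
  | .inr (.inr (.inr q)), .inr (.inr (.inr q')) => q.1 = q'.1 ∧ G3.Adj q.2 q'.2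
  | _, _ => False

/-- The subdivision vertex-edge neighbourhood edge-corona `G1^S ◊ (G2^V ∪ G3^E)`. -/
def svee (G1 : SimpleGraph V1) (G2 : SimpleGraph V2) (G3 : SimpleGraph V3) :
    SimpleGraph (V1 ⊕ (G1.edgeSet ⊕ ((G1.edgeSet × V2) ⊕ (V1 × V3)))) where
  Adj := sveeAdj G1 G2 G3
  symm := by
    constructor
    rintro (v|e|p|q) (v'|e'|p'|q') h <;>
      first
        | exact h
        | exact ⟨h.1.symm, h.2.symm⟩
        | exact h.elim
  loopless := by
    constructor
    rintro (v|e|p|q) h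
    · exact h
    · exact h
    · exact G2.loopless.irrefl _ h.2
    · exact G3.loopless.irrefl _ h.2

end Corona

section Helpers
variable {V : Type*} [Fintype V]

lemma adjMat_apply' {V : Type*} (G : SimpleGraph V) (i j : V) [Decidable (G.Adj i j)] :
    adjMat G i j = if G.Adj i j then 1 else 0 := by
  unfold adjMat
  rw [SimpleGraph.adjMatrix_apply]
  congr

lemma normLap_apply (G : SimpleGraph V) (i j : V) [Decidable (i = j)] [Decidable (G.Adj i j)] :
    normLap G i j = (if i = j then 1 else 0)
      - (Real.sqrt (deg G i))⁻¹ * (if G.Adj i j then 1 else 0) * (Real.sqrt (deg G j))⁻¹ := by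
  classical
  unfold normLap
  rw [Matrix.sub_apply, Matrix.mul_diagonal, Matrix.diagonal_mul, Matrix.one_apply,
    adjMat_apply']
  congr

lemma deg_eq_sum (G : SimpleGraph V) (v : V) [DecidableRel G.Adj] :
    deg G v = ∑ u, if G.Adj v u then 1 else 0 := by
  classical
  unfold deg
  rw [SimpleGraph.degree, SimpleGraph.neighborFinset_eq_filter, Finset.card_filter]
  exact Finset.sum_congr rfl fun u _ => by congr

lemma card_inc (G : SimpleGraph V) [Fintype G.edgeSet]
    (v : V) [Fintype {e : G.edgeSet // v ∈ (e : Sym2 V)}] :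
    Fintype.card {e : G.edgeSet // v ∈ (e : Sym2 V)} = deg G v := by
  classical
  unfold deg
  rw [← SimpleGraph.card_incidenceSet_eq_degree]
  exact Fintype.card_congr ((Equiv.subtypeSubtypeEquivSubtypeInter (· ∈ G.edgeSet) (v ∈ ·)).trans
    (Equiv.subtypeEquivRight fun x => Iff.rfl))

lemma gsum_adj (G : SimpleGraph V) (b : V) {D : ∀ w, Decidable (G.Adj b w)} :
    (∑ w : V, @ite ℕ (G.Adj b w) (D w) 1 0) = deg G b := by
  classical
  rw [deg_eq_sum]
  exact Finset.sum_congr rfl fun u _ => by congr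

lemma gsum_inc (G : SimpleGraph V) [Fintype G.edgeSet] (v : V)
    {D : ∀ e : G.edgeSet, Decidable (v ∈ (e : Sym2 V))} :
    (∑ e : G.edgeSet, @ite ℕ (v ∈ (e : Sym2 V)) (D e) 1 0) = deg G v := by
  classical
  rw [show (∑ e : G.edgeSet, @ite ℕ (v ∈ (e : Sym2 V)) (D e) 1 0)
      = ∑ e : G.edgeSet, (if v ∈ (e : Sym2 V) then 1 else 0) from
    Finset.sum_congr rfl fun e _ => by congr]
  rw [← Finset.card_filter, ← card_inc G v]
  convert (Fintype.card_subtype _).symm using 2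

lemma gsum_inc2 {W : Type*} [Fintype W] (G : SimpleGraph V) [Fintype G.edgeSet] (v : V)
    {D : ∀ (e : G.edgeSet) (w : W), Decidable (v ∈ (e : Sym2 V))} :
    (∑ e : G.edgeSet, ∑ w : W, @ite ℕ (v ∈ (e : Sym2 V)) (D e w) 1 0)
      = deg G v * Fintype.card W := by
  classical
  have h : ∀ e : G.edgeSet, (∑ w : W, @ite ℕ (v ∈ (e : Sym2 V)) (D e w) 1 0)
      = Fintype.card W * (if v ∈ (e : Sym2 V) then 1 else 0) := fun e => by
    by_cases hv : v ∈ (e : Sym2 V) <;> simp [hv, Finset.sum_const]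
  rw [Finset.sum_congr rfl fun e _ => h e, ← Finset.mul_sum, gsum_inc, mul_comm]

lemma gsum_eq2 {α W : Type*} [Fintype α] [Fintype W] (v : α)
    {D : ∀ (x : α) (w : W), Decidable (x = v)} :
    (∑ x : α, ∑ w : W, @ite ℕ (x = v) (D x w) 1 0) = Fintype.card W := by
  classical
  have h : ∀ x : α, (∑ w : W, @ite ℕ (x = v) (D x w) 1 0)
      = Fintype.card W * (if x = v then 1 else 0) := fun x => by
    by_cases hv : x = v <;> simp [hv, Finset.sum_const]
  rw [Finset.sum_congr rfl fun x _ => h x]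
  simp [mul_ite, Finset.sum_ite_eq']

lemma gsum_eq1 {α : Type*} [Fintype α] (v : α) {D : ∀ x : α, Decidable (v = x)} :
    (∑ x : α, @ite ℕ (v = x) (D x) 1 0) = 1 := by
  classical
  rw [Finset.sum_congr rfl fun x _ => show (@ite ℕ (v = x) (D x) 1 0) = if v = x then 1 else 0 from by congr]
  classical
  rw [← Finset.card_filter, Finset.card_eq_one]
  exact ⟨v, by ext x; simp [eq_comm]⟩

lemma gcard_mem_edge (G : SimpleGraph V) (e : G.edgeSet)
    {D : ∀ v : V, Decidable (v ∈ (e : Sym2 V))} :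
    (∑ v : V, @ite ℕ (v ∈ (e : Sym2 V)) (D v) 1 0) = 2 := by
  classical
  rw [Finset.sum_congr rfl fun v _ =>
    show (@ite ℕ (v ∈ (e : Sym2 V)) (D v) 1 0) = if v ∈ (e : Sym2 V) then 1 else 0 from by congr]
  obtain ⟨e, he⟩ := e
  induction e with
  | _ x y =>
    rw [SimpleGraph.mem_edgeSet] at he
    have hxy := G.ne_of_adj he
    have hf : (Finset.univ.filter (· ∈ (s(x,y) : Sym2 V))) = {x, y} := by
      ext v; simp [Sym2.mem_iff]
    rw [← Finset.card_filter]
    simp only [hf]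
    rw [Finset.card_insert_of_notMem (by simp [hxy]), Finset.card_singleton]

lemma gsum_pair {α : Type*} [Fintype α] {W : Type*} [Fintype W] (G : SimpleGraph W)
    (a : α) (b : W) {D : ∀ (x : α) (w : W), Decidable (a = x ∧ G.Adj b w)} :
    (∑ x : α, ∑ w : W, @ite ℕ (a = x ∧ G.Adj b w) (D x w) 1 0) = deg G b := by
  classical
  have h : ∀ x w, (@ite ℕ (a = x ∧ G.Adj b w) (D x w) 1 0)
      = if a = x then (if G.Adj b w then 1 else 0) else 0 := fun x w => by
    by_cases h1 : a = x <;> by_cases h2 : G.Adj b w <;> simp [h1, h2]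
  rw [Finset.sum_congr rfl fun x _ => Finset.sum_congr rfl fun w _ => h x w]
  rw [Finset.sum_comm]
  simp only [Finset.sum_ite_eq, Finset.mem_univ, if_true]
  exact gsum_adj G b

lemma gsum_false0 {α : Type*} [Fintype α] {D : α → Decidable False} :
    (∑ x : α, @ite ℕ False (D x) 1 0) = 0 := by
  simp

lemma gsum_false2 {α β : Type*} [Fintype α] [Fintype β] {D : α → β → Decidable False} :
    (∑ x : α, ∑ y : β, @ite ℕ False (D x y) 1 0) = 0 := by
  simp

section Corona2
variable {V1 V2 V3 : Type*}
variable [Fintype V1] [Fintype V2] [Fintype V3]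
  (G1 : SimpleGraph V1) (G2 : SimpleGraph V2) (G3 : SimpleGraph V3) [Fintype G1.edgeSet]

lemma svee_adj : (svee G1 G2 G3).Adj = sveeAdj G1 G2 G3 := rfl

lemma deg_svee_inl (v : V1) :
    deg (svee G1 G2 G3) (Sum.inl v) =
      deg G1 v * Fintype.card V2 + deg G1 v + Fintype.card V3 := by
  classical
  rw [deg_eq_sum]
  simp only [Fintype.sum_sum_type, Fintype.sum_prod_type, svee_adj, sveeAdj, if_false,
    Finset.sum_const_zero, zero_add]
  rw [show deg G1 v * Fintype.card V2 + deg G1 v + Fintype.card V3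
      = deg G1 v + (deg G1 v * Fintype.card V2 + Fintype.card V3) by ring]
  exact (congrArg₂ (· + ·) gsum_false0 (congrArg₂ (· + ·) (gsum_inc G1 v)
    (congrArg₂ (· + ·) (gsum_inc2 G1 v) (gsum_eq2 v)))).trans (zero_add _)

lemma deg_svee_ins (e : G1.edgeSet) :
    deg (svee G1 G2 G3) (Sum.inr (Sum.inl e)) = 2 := by
  classical
  rw [deg_eq_sum]
  simp only [Fintype.sum_sum_type, Fintype.sum_prod_type, svee_adj, sveeAdj, if_false,
    Finset.sum_const_zero, zero_add, add_zero]
  exact (congrArg₂ (· + ·) (gcard_mem_edge G1 e)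
    (congrArg₂ (· + ·) gsum_false0 (congrArg₂ (· + ·) gsum_false2 gsum_false2))).trans rfl

lemma deg_svee_g2 (p : G1.edgeSet × V2) :
    deg (svee G1 G2 G3) (Sum.inr (Sum.inr (Sum.inl p))) = deg G2 p.2 + 2 := by
  classical
  rw [deg_eq_sum]
  simp only [Fintype.sum_sum_type, Fintype.sum_prod_type, svee_adj, sveeAdj, if_false,
    Finset.sum_const_zero, zero_add, add_zero]
  rw [add_comm (deg G2 p.2) 2]
  exact (congrArg₂ (· + ·) (gcard_mem_edge G1 p.1) (congrArg₂ (· + ·) gsum_false0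
    (congrArg₂ (· + ·) (gsum_pair G2 p.1 p.2) gsum_false2))).trans (by simp)

lemma deg_svee_g3 (q : V1 × V3) :
    deg (svee G1 G2 G3) (Sum.inr (Sum.inr (Sum.inr q))) = deg G3 q.2 + 1 := by
  classical
  rw [deg_eq_sum]
  simp only [Fintype.sum_sum_type, Fintype.sum_prod_type, svee_adj, sveeAdj, if_false,
    Finset.sum_const_zero, zero_add, add_zero]
  rw [add_comm (deg G3 q.2) 1]
  exact (congrArg₂ (· + ·) (gsum_eq1 q.1) (congrArg₂ (· + ·) gsum_false0
    (congrArg₂ (· + ·) gsum_false2 (gsum_pair G3 q.1 q.2)))).trans (by simp)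

end Corona2


section AdjIff
variable {V1 V2 V3 : Type*} (G1 : SimpleGraph V1) (G2 : SimpleGraph V2) (G3 : SimpleGraph V3)

@[simp] lemma s11 (v v' : V1) : (svee G1 G2 G3).Adj (.inl v) (.inl v') ↔ False := Iff.rfl
@[simp] lemma s12 (v : V1) (e : G1.edgeSet) :
    (svee G1 G2 G3).Adj (.inl v) (.inr (.inl e)) ↔ v ∈ (e : Sym2 V1) := Iff.rfl
@[simp] lemma s13 (v : V1) (p : G1.edgeSet × V2) :
    (svee G1 G2 G3).Adj (.inl v) (.inr (.inr (.inl p))) ↔ v ∈ (p.1 : Sym2 V1) := Iff.rfl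
@[simp] lemma s14 (v : V1) (q : V1 × V3) :
    (svee G1 G2 G3).Adj (.inl v) (.inr (.inr (.inr q))) ↔ q.1 = v := Iff.rfl
@[simp] lemma s21 (v : V1) (e : G1.edgeSet) :
    (svee G1 G2 G3).Adj (.inr (.inl e)) (.inl v) ↔ v ∈ (e : Sym2 V1) := Iff.rfl
@[simp] lemma s22 (e e' : G1.edgeSet) :
    (svee G1 G2 G3).Adj (.inr (.inl e)) (.inr (.inl e')) ↔ False := Iff.rfl
@[simp] lemma s23 (e : G1.edgeSet) (p : G1.edgeSet × V2) :
    (svee G1 G2 G3).Adj (.inr (.inl e)) (.inr (.inr (.inl p))) ↔ False := Iff.rfl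
@[simp] lemma s24 (e : G1.edgeSet) (q : V1 × V3) :
    (svee G1 G2 G3).Adj (.inr (.inl e)) (.inr (.inr (.inr q))) ↔ False := Iff.rfl
@[simp] lemma s31 (p : G1.edgeSet × V2) (v : V1) :
    (svee G1 G2 G3).Adj (.inr (.inr (.inl p))) (.inl v) ↔ v ∈ (p.1 : Sym2 V1) := Iff.rfl
@[simp] lemma s32 (p : G1.edgeSet × V2) (e : G1.edgeSet) :
    (svee G1 G2 G3).Adj (.inr (.inr (.inl p))) (.inr (.inl e)) ↔ False := Iff.rfl
@[simp] lemma s33 (p p' : G1.edgeSet × V2) :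
    (svee G1 G2 G3).Adj (.inr (.inr (.inl p))) (.inr (.inr (.inl p'))) ↔
      p.1 = p'.1 ∧ G2.Adj p.2 p'.2 := Iff.rfl
@[simp] lemma s34 (p : G1.edgeSet × V2) (q : V1 × V3) :
    (svee G1 G2 G3).Adj (.inr (.inr (.inl p))) (.inr (.inr (.inr q))) ↔ False := Iff.rfl
@[simp] lemma s41 (q : V1 × V3) (v : V1) :
    (svee G1 G2 G3).Adj (.inr (.inr (.inr q))) (.inl v) ↔ q.1 = v := Iff.rfl
@[simp] lemma s42 (q : V1 × V3) (e : G1.edgeSet) :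
    (svee G1 G2 G3).Adj (.inr (.inr (.inr q))) (.inr (.inl e)) ↔ False := Iff.rfl
@[simp] lemma s43 (q : V1 × V3) (p : G1.edgeSet × V2) :
    (svee G1 G2 G3).Adj (.inr (.inr (.inr q))) (.inr (.inr (.inl p))) ↔ False := Iff.rfl
@[simp] lemma s44 (q q' : V1 × V3) :
    (svee G1 G2 G3).Adj (.inr (.inr (.inr q))) (.inr (.inr (.inr q'))) ↔
      q.1 = q'.1 ∧ G3.Adj q.2 q'.2 := Iff.rfl

end AdjIff
end Helpers



theorem stmt_5 {V1 V2 V3 : Type*} [Fintype V1] [DecidableEq V1]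
    [Fintype V2] [DecidableEq V2] [Fintype V3] [DecidableEq V3]
    (G1 : SimpleGraph V1) (G2 : SimpleGraph V2) (G3 : SimpleGraph V3)
    [Fintype G1.edgeSet]
    (r1 r2 r3 : ℕ) (hr1 : 1 ≤ r1)
    (h1 : IsReg G1 r1) (h2 : IsReg G2 r2) (h3 : IsReg G3 r3)
    (a b c : ℝ)
    (ha : a = (Real.sqrt (2 * ((r1 : ℝ) * Fintype.card V2 + r1 + Fintype.card V3)))⁻¹)
    (hb : b = (Real.sqrt (((r2 : ℝ) + 2) * ((r1 : ℝ) * Fintype.card V2 + r1 + Fintype.card V3)))⁻¹)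
    (hc : c = (Real.sqrt (((r3 : ℝ) + 1) * ((r1 : ℝ) * Fintype.card V2 + r1 + Fintype.card V3)))⁻¹) :
    normLap (svee G1 G2 G3) =
      Matrix.fromBlocks (1 : Matrix V1 V1 ℝ)
        (Matrix.fromCols (-a • incMat G1)
          (Matrix.fromCols
            (Matrix.of fun (v : V1) (p : G1.edgeSet × V2) => -(incMat G1 v p.1 * b))
            (Matrix.of fun (v : V1) (q : V1 × V3) => -(if q.1 = v then c else 0))))
        (Matrix.fromRows (-a • (incMat G1)ᵀ)
          (Matrix.fromRows
            (Matrix.of fun (p : G1.edgeSet × V2) (v : V1) => -(incMat G1 v p.1 * b))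
            (Matrix.of fun (q : V1 × V3) (v : V1) => -(if q.1 = v then c else 0))))
        (Matrix.fromBlocks (1 : Matrix G1.edgeSet G1.edgeSet ℝ)
          (0 : Matrix G1.edgeSet ((G1.edgeSet × V2) ⊕ (V1 × V3)) ℝ)
          (0 : Matrix ((G1.edgeSet × V2) ⊕ (V1 × V3)) G1.edgeSet ℝ)
          (Matrix.fromBlocks
            ((1 : Matrix G1.edgeSet G1.edgeSet ℝ) ⊗ₖ
              ((1 : Matrix V2 V2 ℝ) - ((r2 : ℝ) + 2)⁻¹ • adjMat G2))
            0 0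
            ((1 : Matrix V1 V1 ℝ) ⊗ₖ
              ((1 : Matrix V3 V3 ℝ) - ((r3 : ℝ) + 1)⁻¹ • adjMat G3)))) := by
  classical
  have hr1' : (1:ℝ) ≤ (r1:ℝ) := by exact_mod_cast hr1
  set T : ℝ := (r1:ℝ) * Fintype.card V2 + (r1:ℝ) + (Fintype.card V3:ℝ) with hTdef
  have hT0 : (0:ℝ) < T := by
    have hp : (0:ℝ) ≤ (r1:ℝ) * Fintype.card V2 := by positivity
    have hq : (0:ℝ) ≤ (Fintype.card V3 : ℝ) := Nat.cast_nonneg _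
    rw [hTdef]; linarith
  have dInl : ∀ v : V1, ((deg (svee G1 G2 G3) (Sum.inl v) : ℝ)) = T := by
    intro v; rw [deg_svee_inl, h1 v, hTdef]; push_cast; ring
  have dIns : ∀ e : G1.edgeSet, ((deg (svee G1 G2 G3) (Sum.inr (Sum.inl e)) : ℝ)) = 2 := by
    intro e; rw [deg_svee_ins]; norm_num
  have dG2 : ∀ p : G1.edgeSet × V2,
      ((deg (svee G1 G2 G3) (Sum.inr (Sum.inr (Sum.inl p))) : ℝ)) = (r2:ℝ) + 2 := by
    intro p; rw [deg_svee_g2, h2 p.2]; push_cast; ring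
  have dG3 : ∀ q : V1 × V3,
      ((deg (svee G1 G2 G3) (Sum.inr (Sum.inr (Sum.inr q))) : ℝ)) = (r3:ℝ) + 1 := by
    intro q; rw [deg_svee_g3, h3 q.2]; push_cast; ring
  have ha' : a = (Real.sqrt 2)⁻¹ * (Real.sqrt T)⁻¹ := by
    rw [ha, Real.sqrt_mul (by norm_num : (0:ℝ) ≤ 2), mul_inv]
  have hb' : b = (Real.sqrt ((r2:ℝ)+2))⁻¹ * (Real.sqrt T)⁻¹ := by
    rw [hb, Real.sqrt_mul (by positivity), mul_inv]
  have hc' : c = (Real.sqrt ((r3:ℝ)+1))⁻¹ * (Real.sqrt T)⁻¹ := by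
    rw [hc, Real.sqrt_mul (by positivity), mul_inv]
  have h22 : (Real.sqrt ((r2:ℝ)+2))⁻¹ * (Real.sqrt ((r2:ℝ)+2))⁻¹ = ((r2:ℝ)+2)⁻¹ := by
    rw [← mul_inv, Real.mul_self_sqrt (by positivity)]
  have h33 : (Real.sqrt ((r3:ℝ)+1))⁻¹ * (Real.sqrt ((r3:ℝ)+1))⁻¹ = ((r3:ℝ)+1)⁻¹ := by
    rw [← mul_inv, Real.mul_self_sqrt (by positivity)]
  ext i j
  rcases i with v | e | p | q <;> rcases j with v' | e' | p' | q'
  · -- v v'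
    rw [normLap_apply]
    simp [Matrix.one_apply]
  · -- v e'
    rw [normLap_apply, dInl v, dIns e']
    by_cases h : v ∈ (e' : Sym2 V1)
    · simp [h, ha', incMat]; ring
    · simp [h, incMat]
  · -- v p'
    rw [normLap_apply, dInl v, dG2 p']
    by_cases h : v ∈ (p'.1 : Sym2 V1)
    · simp [h, hb', incMat]; ring
    · simp [h, incMat]
  · -- v q'
    rw [normLap_apply, dInl v, dG3 q']
    by_cases h : q'.1 = v
    · simp [h, hc', incMat]; ring
    · simp [h, incMat]
  · -- e v'
    rw [normLap_apply, dIns e, dInl v']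
    by_cases h : v' ∈ (e : Sym2 V1)
    · simp [h, ha', incMat]
    · simp [h, incMat]
  · -- e e'
    rw [normLap_apply]
    simp [Matrix.one_apply]
  · -- e p'
    rw [normLap_apply]
    simp
  · -- e q'
    rw [normLap_apply]
    simp
  · -- p v'
    rw [normLap_apply, dG2 p, dInl v']
    by_cases h : v' ∈ (p.1 : Sym2 V1)
    · simp [h, hb', incMat]
    · simp [h, incMat]
  · -- p e'
    rw [normLap_apply]
    simp
  · -- p p'
    rw [normLap_apply, dG2 p, dG2 p']
    obtain ⟨e, w⟩ := p; obtain ⟨e', w'⟩ := p'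
    by_cases he : e = e'
    · subst he
      by_cases hw : G2.Adj w w'
      · have hne : w ≠ w' := G2.ne_of_adj hw
        simp [hw, hne, Prod.ext_iff, adjMat_apply', Matrix.one_apply, h22]
      · by_cases hww : w = w' <;>
          simp [hw, hww, Prod.ext_iff, adjMat_apply', Matrix.one_apply]
    · simp [he, Prod.ext_iff, adjMat_apply', Matrix.one_apply]
  · -- p q'
    rw [normLap_apply]
    simp
  · -- q v'
    rw [normLap_apply, dG3 q, dInl v']
    by_cases h : q.1 = v'
    · simp [h, hc', incMat]
    · simp [h, incMat]
  · -- q e'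
    rw [normLap_apply]
    simp
  · -- q p'
    rw [normLap_apply]
    simp
  · -- q q'
    rw [normLap_apply, dG3 q, dG3 q']
    obtain ⟨x, w⟩ := q; obtain ⟨x', w'⟩ := q'
    by_cases hx : x = x'
    · subst hx
      by_cases hw : G3.Adj w w'
      · have hne : w ≠ w' := G3.ne_of_adj hw
        simp [hw, hne, Prod.ext_iff, adjMat_apply', Matrix.one_apply, h33]
      · by_cases hww : w = w' <;>
          simp [hw, hww, Prod.ext_iff, adjMat_apply', Matrix.one_apply]
    · simp [hx, Prod.ext_iff, adjMat_apply', Matrix.one_apply]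


end NLS
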